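/- Let φ and ψ be holomorphic self-maps of the unit disk D, and suppose there exist ζ_1, ζ_2 ∈ ∂D and ω ∈ ∂D such that φ has nontangential limit ω at ζ_1, ψ has nontangential limit ω at ζ_2, and the angular derivatives φ'(ζ_1) and ψ'(ζ_2) exist. Then on H^2(D), and on A^2_s(D) for s > −1, lim_{r→1⁻} ⟨C_ψ* k_{rζ_2}, C_φ* k_{rζ_1}⟩ = ( 2/(|φ'(ζ_1)| + |ψ'(ζ_2)|) )^t > 0, where t = 1 for H^2(D) and t = s+2 for A^2_s(D). Equivalently, lim_{r→1⁻} ((1−r^2)/(1−φ(rζ_1) \overline{ψ(rζ_2)}))^t = (2/(|φ'(ζ_1)|+|ψ'(ζ_2)|))^t. -/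

import Mathlib

open Filter MeasureTheory Metric Set
open scoped ComplexInnerProductSpace Topology

noncomputable section

/-- The open unit disk `D` in `ℂ`. -/
abbrev Disk : Set ℂ := Metric.ball 0 1

/-- An abstract presentation of a reproducing-kernel Hilbert space of holomorphic functions
on the unit disk `D` with reproducing kernel `K_w(z) = (1 - z·conj w)^{-t}`.  For `t = 1`
this is the Hardy space `H²(D)`; for `t = s + 2` (`s > -1`) it is the weighted Bergman space
`A²_s(D)`.  Injectivity of evaluation forces the kernels to be total, so such a structure
determines the space uniquely up to canonical unitary equivalence. -/
structure DiskKernelSpace (t : ℝ) where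
  (H : Type)
  [grp : NormedAddCommGroup H]
  [ips : InnerProductSpace ℂ H]
  [cpl : CompleteSpace H]
  eval : H → ℂ → ℂ
  eval_add : ∀ f g : H, ∀ z, eval (f + g) z = eval f z + eval g z
  eval_smul : ∀ (c : ℂ) (f : H) (z : ℂ), eval (c • f) z = c * eval f z
  holo : ∀ f : H, DifferentiableOn ℂ (eval f) Disk
  eval_injective : ∀ f g : H, (∀ z ∈ Disk, eval f z = eval g z) → f = g
  kernel : ℂ → H
  eval_kernel : ∀ w ∈ Disk, ∀ z ∈ Disk,
    eval (kernel w) z = (1 - z * (starRingEnd ℂ) w) ^ (-(t : ℂ))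
  reproducing : ∀ (f : H), ∀ w ∈ Disk, ⟪kernel w, f⟫ = eval f w

attribute [instance] DiskKernelSpace.grp DiskKernelSpace.ips DiskKernelSpace.cpl

/-- `T` is the composition operator `C_φ : f ↦ f ∘ φ` on `S`. -/
def DiskKernelSpace.IsCompositionOperator {t : ℝ} (S : DiskKernelSpace t)
    (φ : ℂ → ℂ) (T : S.H →L[ℂ] S.H) : Prop :=
  ∀ f : S.H, ∀ z ∈ Disk, S.eval (T f) z = S.eval f (φ z)

/-- `f` has nontangential limit `L` at the boundary point `ζ` of the unit disk: `f(z) → L`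
as `z → ζ` within every Stolz angle `{z ∈ D : |z - ζ| < M (1 - |z|)}`, `M > 1`. -/
def HasNontangentialLimit {α : Type*} [TopologicalSpace α] (f : ℂ → α) (ζ : ℂ) (L : α) :
    Prop :=
  ∀ M : ℝ, 1 < M →
    Tendsto f (𝓝[{z : ℂ | ‖z‖ < 1 ∧ ‖z - ζ‖ < M * (1 - ‖z‖)}] ζ) (𝓝 L)

namespace AKI
open Complex ComplexConjugate

lemma mem_disk_iff {z : ℂ} : z ∈ Disk ↔ ‖z‖ < 1 := by
  simp [Disk, Metric.mem_ball, dist_zero_right]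

/-- Key algebraic identity. -/
lemma normSq_identity (a z : ℂ) :
    normSq (1 - conj a * z) - normSq (a - z) = (1 - normSq a) * (1 - normSq z) := by
  simp only [normSq_apply, mul_re, mul_im, conj_re, conj_im, sub_re, sub_im, one_re, one_im]
  ring

lemma den_ne {a z : ℂ} (ha : ‖a‖ < 1) (hz : ‖z‖ < 1) : 1 - conj a * z ≠ 0 := by
  intro h
  have h1 : (1 : ℂ) = conj a * z := by linear_combination h
  have : (1 : ℝ) = ‖conj a * z‖ := by rw [← h1]; simp
  rw [norm_mul, RCLike.norm_conj] at this
  nlinarith [norm_nonneg a, norm_nonneg z]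

/-- Möbius transformation of the disk. -/
def mob (a z : ℂ) : ℂ := (a - z) / (1 - conj a * z)

lemma normSq_lt_of_disk {z : ℂ} (h : ‖z‖ < 1) : normSq z < 1 := by
  have h' : ‖z‖ < 1 := h
  rw [normSq_eq_norm_sq]
  nlinarith [norm_nonneg z]

lemma norm_lt_of_normSq_lt {z : ℂ} (h : normSq z < 1) : ‖z‖ < 1 := by
  nlinarith [norm_nonneg z, normSq_eq_norm_sq z]

lemma mob_mem {a z : ℂ} (ha : ‖a‖ < 1) (hz : ‖z‖ < 1) : ‖mob a z‖ < 1 := by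
  have hden := den_ne ha hz
  have hid := normSq_identity a z
  have h1 : normSq a < 1 := normSq_lt_of_disk ha
  have h2 : normSq z < 1 := normSq_lt_of_disk hz
  have hpos : 0 < normSq (1 - conj a * z) := normSq_pos.2 hden
  have key : normSq (a - z) < normSq (1 - conj a * z) := by nlinarith
  apply norm_lt_of_normSq_lt
  rw [mob, normSq_div, div_lt_one hpos]; exact key

lemma mob_self (a : ℂ) : mob a a = 0 := by simp [mob]

lemma mob_zero (a : ℂ) : mob a 0 = a := by simp [mob]

lemma mob_invol {a z : ℂ} (ha : ‖a‖ < 1) (hz : ‖z‖ < 1) : mob a (mob a z) = z := by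
  have hden := den_ne ha hz
  have h1 : normSq a < 1 := normSq_lt_of_disk ha
  have hca : conj a * a = (normSq a : ℝ) := by
    rw [mul_comm]; exact Complex.mul_conj a
  have hden2 : 1 - conj a * mob a z = (1 - (normSq a : ℂ)) / (1 - conj a * z) := by
    rw [mob]
    field_simp
    linear_combination (-1 : ℂ) * hca
  have hna : (1 : ℂ) - (normSq a : ℂ) ≠ 0 := by
    intro h
    have : (normSq a : ℂ) = 1 := by linear_combination -h
    have := congrArg Complex.re this
    simp at this; linarith
  rw [mob, hden2, mob]
  rw [div_eq_iff (div_ne_zero hna hden)]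
  rw [mul_div_assoc', eq_div_iff hden, sub_mul, div_mul_cancel₀ _ hden]
  linear_combination (-z) * hca

lemma mob_differentiableOn {a : ℂ} (ha : ‖a‖ < 1) : DifferentiableOn ℂ (mob a) Disk := by
  apply DifferentiableOn.div
  · exact (differentiable_const a).differentiableOn.sub differentiable_id.differentiableOn
  · exact (differentiable_const (1:ℂ)).differentiableOn.sub
      ((differentiable_const (conj a)).mul differentiable_id).differentiableOn
  · intro z hz; exact den_ne ha (mem_disk_iff.1 hz)


/-- Schwarz–Pick, cross-multiplied form. -/
lemma schwarzPick {f : ℂ → ℂ} (hf : DifferentiableOn ℂ f Disk) (hm : Set.MapsTo f Disk Disk)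
    {a b : ℂ} (ha : ‖a‖ < 1) (hb : ‖b‖ < 1) :
    normSq (f a - f b) * normSq (1 - conj a * b) ≤
      normSq (a - b) * normSq (1 - conj (f a) * f b) := by
  have hfa : ‖f a‖ < 1 := mem_disk_iff.1 (hm (mem_disk_iff.2 ha))
  have hfb : ‖f b‖ < 1 := mem_disk_iff.1 (hm (mem_disk_iff.2 hb))
  set g : ℂ → ℂ := fun z => mob (f a) (f (mob a z)) with hg
  have hgd : DifferentiableOn ℂ g Disk := by
    apply DifferentiableOn.comp (mob_differentiableOn hfa)
    · apply DifferentiableOn.comp hf (mob_differentiableOn ha)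
      intro z hz; exact mem_disk_iff.2 (mob_mem ha (mem_disk_iff.1 hz))
    · intro z hz
      exact hm (mem_disk_iff.2 (mob_mem ha (mem_disk_iff.1 hz)))
  have hgm : Set.MapsTo g Disk Disk := by
    intro z hz
    exact mem_disk_iff.2 (mob_mem hfa
      (mem_disk_iff.1 (hm (mem_disk_iff.2 (mob_mem ha (mem_disk_iff.1 hz))))))
  have hg0 : g 0 = 0 := by simp [hg, mob_zero, mob_self]
  have hzm : ‖mob a b‖ < 1 := by
    exact mob_mem ha hb
  have hsch := Complex.norm_le_norm_of_mapsTo_ball hgd (hgm.mono_right ball_subset_closedBall) hg0 hzm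
  have hgab : g (mob a b) = mob (f a) (f b) := by
    rw [hg]; simp only []
    rw [mob_invol ha hb]
  rw [hgab] at hsch
  -- square both sides
  have h2 : normSq (mob (f a) (f b)) ≤ normSq (mob a b) := by
    rw [normSq_eq_norm_sq, normSq_eq_norm_sq]
    have := norm_nonneg (mob (f a) (f b))
    nlinarith [norm_nonneg (mob a b)]
  have hd1 : 0 < normSq (1 - conj (f a) * f b) := normSq_pos.2 (den_ne hfa hfb)
  have hd2 : 0 < normSq (1 - conj a * b) := normSq_pos.2 (den_ne ha hb)
  rw [mob, mob, normSq_div, normSq_div, div_le_div_iff₀ hd1 hd2] at h2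
  linarith

/-- Schwarz–Pick, product form. -/
lemma schwarzPick' {f : ℂ → ℂ} (hf : DifferentiableOn ℂ f Disk) (hm : Set.MapsTo f Disk Disk)
    {a b : ℂ} (ha : ‖a‖ < 1) (hb : ‖b‖ < 1) :
    (1 - normSq a) * (1 - normSq b) * normSq (1 - conj (f a) * f b) ≤
      (1 - normSq (f a)) * (1 - normSq (f b)) * normSq (1 - conj a * b) := by
  have hfa : ‖f a‖ < 1 := mem_disk_iff.1 (hm (mem_disk_iff.2 ha))
  have hfb : ‖f b‖ < 1 := mem_disk_iff.1 (hm (mem_disk_iff.2 hb))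
  have h1 := normSq_identity a b
  have h2 := normSq_identity (f a) (f b)
  have h3 := schwarzPick hf hm ha hb
  nlinarith [normSq_pos.2 (den_ne ha hb), normSq_pos.2 (den_ne hfa hfb)]

/-- `f` has nontangential limit `L` at `ζ` -- copy of statement's def for testing. -/
def HasNontangentialLimit {α : Type*} [TopologicalSpace α] (f : ℂ → α) (ζ : ℂ) (L : α) :
    Prop :=
  ∀ M : ℝ, 1 < M →
    Filter.Tendsto f (𝓝[{z : ℂ | ‖z‖ < 1 ∧ ‖z - ζ‖ < M * (1 - ‖z‖)}] ζ) (𝓝 L)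


lemma radial_tendsto {α : Type*} [TopologicalSpace α] {f : ℂ → α} {ζ : ℂ} (hζ : ‖ζ‖ = 1)
    {L : α} (h : HasNontangentialLimit f ζ L) :
    Tendsto (fun r : ℝ => f ((r : ℂ) * ζ)) (𝓝[<] (1 : ℝ)) (𝓝 L) := by
  have h2 := h 2 one_lt_two
  apply h2.comp
  rw [tendsto_nhdsWithin_iff]
  constructor
  · have : Tendsto (fun r : ℝ => (r : ℂ) * ζ) (𝓝[<] (1:ℝ)) (𝓝 ((1 : ℂ) * ζ)) := by
      apply Tendsto.mono_left _ nhdsWithin_le_nhds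
      exact (Complex.continuous_ofReal.tendsto 1).mul tendsto_const_nhds
    simpa using this
  · filter_upwards [Ioo_mem_nhdsLT_of_mem (by norm_num : (1:ℝ) ∈ Set.Ioc (0:ℝ) 1)] with r hr
    obtain ⟨hr0, hr1⟩ := hr
    have hnr : ‖(r : ℂ) * ζ‖ = r := by
      rw [norm_mul, hζ, Complex.norm_real, Real.norm_eq_abs, abs_of_pos hr0, mul_one]
    constructor
    · rw [hnr]; exact hr1
    · have : (r : ℂ) * ζ - ζ = ((r - 1 : ℝ) : ℂ) * ζ := by push_cast; ring
      rw [this, norm_mul, hζ, Complex.norm_real, Real.norm_eq_abs, abs_of_neg (by linarith), mul_one, hnr]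
      linarith

lemma tendstoD {φ : ℂ → ℂ} {ζ ω A : ℂ} (hζ : ‖ζ‖ = 1)
    (hA : HasNontangentialLimit (fun z => (φ z - ω) / (z - ζ)) ζ A) :
    Tendsto (fun r : ℝ => conj ω * (ω - φ ((r : ℂ) * ζ)) / (1 - (r : ℂ)))
      (𝓝[<] (1 : ℝ)) (𝓝 (conj ω * ζ * A)) := by
  have hQ := radial_tendsto hζ hA
  have hζ0 : ζ ≠ 0 := by intro h; rw [h] at hζ; simp at hζ
  have : Tendsto (fun r : ℝ => conj ω * ζ * ((φ ((r:ℂ)*ζ) - ω) / ((r:ℂ)*ζ - ζ)))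
      (𝓝[<] (1:ℝ)) (𝓝 (conj ω * ζ * A)) := tendsto_const_nhds.mul hQ
  apply this.congr'
  filter_upwards [Ioo_mem_nhdsLT_of_mem (by norm_num : (1:ℝ) ∈ Set.Ioc (0:ℝ) 1)] with r hr
  have hr1 : (1 : ℂ) - (r : ℂ) ≠ 0 := by
    intro h
    have : (r : ℂ) = 1 := by linear_combination -h
    have : r = 1 := by exact_mod_cast this
    linarith [hr.2]
  have hden : (r : ℂ) * ζ - ζ = -((1 - (r:ℂ)) * ζ) := by ring
  rw [hden]
  field_simp
  ring


set_option maxHeartbeats 1000000 in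
lemma JC {φ : ℂ → ℂ} (hφ : DifferentiableOn ℂ φ Disk) (hm : Set.MapsTo φ Disk Disk)
    {ζ ω A : ℂ} (hζ : ‖ζ‖ = 1) (hω : ‖ω‖ = 1)
    (hR : HasNontangentialLimit φ ζ ω)
    (hA : HasNontangentialLimit (fun z => (φ z - ω) / (z - ζ)) ζ A) :
    conj ω * ζ * A = (‖A‖ : ℂ) ∧ 0 < ‖A‖ := by
  set l : Filter ℝ := 𝓝[<] (1 : ℝ) with hl
  have hIoo : Set.Ioo (0:ℝ) 1 ∈ l :=
    Ioo_mem_nhdsLT_of_mem (by norm_num : (1:ℝ) ∈ Set.Ioc (0:ℝ) 1)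
  have hnsqω : normSq ω = 1 := by
    rw [normSq_eq_norm_sq, hω]; norm_num
  have hnsqζ : normSq ζ = 1 := by
    rw [normSq_eq_norm_sq, hζ]; norm_num
  have hccω : conj ω * ω = 1 := by
    rw [mul_comm, Complex.mul_conj, hnsqω]; norm_num
  -- membership facts
  have hmem : ∀ r ∈ Set.Ioo (0:ℝ) 1, ‖(r:ℂ) * ζ‖ < 1 := by
    intro r hr
    rw [norm_mul, hζ, Complex.norm_real, Real.norm_eq_abs, abs_of_pos hr.1, mul_one]
    exact hr.2
  have hφmem : ∀ r ∈ Set.Ioo (0:ℝ) 1, ‖φ ((r:ℂ) * ζ)‖ < 1 := fun r hr =>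
    mem_disk_iff.1 (hm (mem_disk_iff.2 (hmem r hr)))
  -- the function D and its limit d
  set D : ℝ → ℂ := fun r => conj ω * (ω - φ ((r : ℂ) * ζ)) / (1 - (r : ℂ)) with hD
  set d : ℂ := conj ω * ζ * A with hd
  have hDt : Tendsto D l (𝓝 d) := tendstoD hζ hA
  have hrad : Tendsto (fun r : ℝ => φ ((r:ℂ) * ζ)) l (𝓝 ω) := radial_tendsto hζ hR
  -- P r = (1 - |φ(rζ)|²)/(1-r)
  set P : ℝ → ℝ := fun r => (1 - normSq (φ ((r:ℂ) * ζ))) / (1 - r) with hP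
  -- basic re/normSq formulas for D r
  have hDform : ∀ r ∈ Set.Ioo (0:ℝ) 1,
      (D r).re = (1 - (conj ω * φ ((r:ℂ)*ζ)).re) / (1 - r) ∧
      normSq (D r) = normSq (ω - φ ((r:ℂ)*ζ)) / (1 - r)^2 := by
    intro r hr
    have h1 : (1:ℂ) - (r:ℂ) = ((1 - r : ℝ) : ℂ) := by push_cast; ring
    have hDr : D r = conj ω * (ω - φ ((r:ℂ)*ζ)) / ((1 - r : ℝ) : ℂ) := by
      simp only [hD]; rw [h1]
    constructor
    · rw [hDr, Complex.div_ofReal_re]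
      congr 1
      have h2 : conj ω * (ω - φ ((r:ℂ)*ζ)) = 1 - conj ω * φ ((r:ℂ)*ζ) := by
        linear_combination hccω
      rw [h2]
      simp [Complex.sub_re]
    · rw [hDr, normSq_div, normSq_mul, normSq_conj, hnsqω, one_mul, Complex.normSq_ofReal]
      ring_nf
  -- identity : P r = 2 (D r).re - normSq (D r) * (1 - r)
  have hkey : ∀ w : ℂ, normSq (ω - w) = 2 * (1 - (conj ω * w).re) - (1 - normSq w) := by
    intro w
    have : normSq (ω - w) = normSq ω - 2 * (conj ω * w).re + normSq w := by
      simp only [normSq_apply, mul_re, sub_re, sub_im, conj_re, conj_im]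
      ring
    rw [this, hnsqω]; ring
  have hPid : ∀ r ∈ Set.Ioo (0:ℝ) 1, P r = 2 * (D r).re - normSq (D r) * (1 - r) := by
    intro r hr
    obtain ⟨h1, h2⟩ := hDform r hr
    have hu : (0:ℝ) < 1 - r := by linarith [hr.2]
    rw [hP, h1, h2, hkey (φ ((r:ℂ)*ζ))]
    field_simp
    ring
  -- limit of P
  have h1r : Tendsto (fun r : ℝ => 1 - r) l (𝓝 0) := by
    have h : Tendsto (fun r : ℝ => 1 - r) (𝓝 (1:ℝ)) (𝓝 (1 - 1)) :=
      (continuous_const.sub continuous_id).tendsto 1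
    simpa using h.mono_left nhdsWithin_le_nhds
  have hPt : Tendsto P l (𝓝 (2 * d.re)) := by
    have : Tendsto (fun r => 2 * (D r).re - normSq (D r) * (1 - r)) l
        (𝓝 (2 * d.re - normSq d * 0)) := by
      exact (tendsto_const_nhds.mul ((Complex.continuous_re.tendsto d).comp hDt)).sub
        (((Complex.continuous_normSq.tendsto d).comp hDt).mul h1r)
    rw [mul_zero, sub_zero] at this
    exact this.congr' (by filter_upwards [hIoo] with r hr using (hPid r hr).symm)
  -- lower bound for P from Schwarz-Pick at 0
  have h0disk : ‖(0:ℂ)‖ < 1 := by norm_num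
  have hφ0 : ‖φ 0‖ < 1 := mem_disk_iff.1 (hm (mem_disk_iff.2 h0disk))
  set c1 : ℝ := (1 - ‖φ 0‖)^2 / (1 - normSq (φ 0)) with hc1def
  have hnsqφ0 : normSq (φ 0) < 1 := normSq_lt_of_disk hφ0
  have hc1 : 0 < c1 := by
    apply div_pos (pow_pos (by linarith) 2) (by linarith)
  have hPlb : ∀ r ∈ Set.Ioo (0:ℝ) 1, c1 ≤ P r := by
    intro r hr
    have hSP := schwarzPick' hφ hm h0disk (hmem r hr)
    simp only [normSq_zero, map_zero, zero_mul, sub_zero, mul_one, one_mul] at hSP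
    -- hSP : (1 - normSq (↑r * ζ)) * normSq (1 - conj (φ 0) * φ (↑r*ζ)) ≤ (1 - normSq (φ 0)) * (1 - normSq (φ (↑r*ζ)))
    have hnr : normSq ((r:ℂ) * ζ) = r^2 := by
      rw [normSq_mul, hnsqζ, mul_one, Complex.normSq_ofReal]; ring
    have hlb : (1 - ‖φ 0‖)^2 ≤ normSq (1 - conj (φ 0) * φ ((r:ℂ)*ζ)) := by
      have h1 : ‖conj (φ 0) * φ ((r:ℂ)*ζ)‖ ≤ ‖φ 0‖ := by
        rw [norm_mul, RCLike.norm_conj]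
        nlinarith [norm_nonneg (φ 0), (hφmem r hr).le]
      have h2 : 1 - ‖φ 0‖ ≤ ‖(1:ℂ) - conj (φ 0) * φ ((r:ℂ)*ζ)‖ := by
        have := norm_sub_norm_le (1:ℂ) (conj (φ 0) * φ ((r:ℂ)*ζ))
        rw [norm_one] at this
        linarith
      rw [normSq_eq_norm_sq]
      nlinarith [norm_nonneg ((1:ℂ) - conj (φ 0) * φ ((r:ℂ)*ζ)), hφ0.le, norm_nonneg (φ 0)]
    rw [hnr, normSq_one, mul_one] at hSP
    have hu : (0:ℝ) < 1 - r := by linarith [hr.2]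
    rw [hP, le_div_iff₀ hu]
    have hr2 : 1 - r ≤ 1 - r^2 := by nlinarith [hr.1.le, hr.2.le]
    have h1r2 : (0:ℝ) ≤ 1 - r^2 := by nlinarith [hr.1.le, hr.2.le]
    have hnsqφr : normSq (φ ((r:ℂ)*ζ)) < 1 := normSq_lt_of_disk (hφmem r hr)
    have step0 : (1-‖φ 0‖)^2 * (1 - r^2) ≤
        (1 - normSq (φ 0)) * (1 - normSq (φ ((r:ℂ)*ζ))) :=
      le_trans (by nlinarith) hSP
    have step : c1 * (1 - r^2) ≤ 1 - normSq (φ ((r:ℂ)*ζ)) := by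
      rw [hc1def, div_mul_eq_mul_div, div_le_iff₀ (by linarith : (0:ℝ) < 1 - normSq (φ 0))]
      nlinarith [step0]
    calc c1 * (1 - r) ≤ c1 * (1 - r^2) := by nlinarith
    _ ≤ 1 - normSq (φ ((r:ℂ)*ζ)) := step
  have hdre : c1 ≤ 2 * d.re := by
    apply ge_of_tendsto hPt
    filter_upwards [hIoo] with r hr using hPlb r hr
  have hdrepos : 0 < d.re := by linarith
  -- Julia's inequality
  have hJulia : ∀ r ∈ Set.Ioo (0:ℝ) 1,
      normSq (D r) * (1 + r) ≤ d.re * P r := by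
    intro r hr
    have hu : (0:ℝ) < 1 - r := by linarith [hr.2]
    -- limit as s → 1 of Schwarz-Pick at a = sζ, b = rζ
    have hmain : 2 * ((1 - r^2) * normSq (1 - conj ω * φ ((r:ℂ)*ζ))) ≤
        2 * d.re * ((1 - normSq (φ ((r:ℂ)*ζ))) * (1-r)^2) := by
      apply le_of_tendsto_of_tendsto
        (f := fun s : ℝ => (1+s) * ((1 - r^2) * normSq (1 - conj (φ ((s:ℂ)*ζ)) * φ ((r:ℂ)*ζ))))
        (g := fun s : ℝ => P s * ((1 - normSq (φ ((r:ℂ)*ζ))) * (1-s*r)^2))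
        (b := l) ?_ ?_ ?_
      · -- tendsto of LHS
        have hc : Tendsto (fun s : ℝ => normSq (1 - conj (φ ((s:ℂ)*ζ)) * φ ((r:ℂ)*ζ))) l
            (𝓝 (normSq (1 - conj ω * φ ((r:ℂ)*ζ)))) := by
          have : Continuous (fun z : ℂ => normSq (1 - conj z * φ ((r:ℂ)*ζ))) :=
            Complex.continuous_normSq.comp
              (continuous_const.sub (Complex.continuous_conj.mul continuous_const))
          exact (this.tendsto ω).comp hrad
        have hs1 : Tendsto (fun s : ℝ => 1 + s) l (𝓝 2) := by
          have h : Tendsto (fun s : ℝ => 1 + s) (𝓝 (1:ℝ)) (𝓝 (1 + 1)) :=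
            (continuous_const.add continuous_id).tendsto 1
          simpa [one_add_one_eq_two] using h.mono_left nhdsWithin_le_nhds
        exact hs1.mul ((tendsto_const_nhds :
          Tendsto (fun _ : ℝ => ((1 - r^2 : ℝ))) l (𝓝 (1 - r^2))).mul hc)
      · -- tendsto of RHS
        have hsr : Tendsto (fun s : ℝ => (1 - normSq (φ ((r:ℂ)*ζ))) * (1-s*r)^2) l
            (𝓝 ((1 - normSq (φ ((r:ℂ)*ζ))) * (1-r)^2)) := by
          apply Tendsto.mono_left _ nhdsWithin_le_nhds
          have : Continuous (fun s : ℝ => (1 - normSq (φ ((r:ℂ)*ζ))) * (1-s*r)^2) :=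
            continuous_const.mul
              ((continuous_const.sub (continuous_id.mul continuous_const)).pow 2)
          have h := this.tendsto (1:ℝ)
          simpa using h
        exact hPt.mul hsr
      · -- eventual inequality from Schwarz-Pick
        filter_upwards [hIoo] with s hs
        have hSP := schwarzPick' hφ hm (hmem s hs) (hmem r hr)
        have hab : conj ((s:ℂ)*ζ) * ((r:ℂ)*ζ) = ((s*r : ℝ) : ℂ) := by
          rw [map_mul]
          have : conj ζ * ζ = ((normSq ζ : ℝ) : ℂ) := by
            rw [mul_comm]; exact Complex.mul_conj ζ
          push_cast
          rw [Complex.conj_ofReal]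
          calc (s:ℂ) * conj ζ * ((r:ℂ) * ζ) = (s:ℂ) * (r:ℂ) * (conj ζ * ζ) := by ring
          _ = (s:ℂ) * (r:ℂ) := by rw [this, hnsqζ]; norm_num
        have hnsq_ab : normSq (1 - conj ((s:ℂ)*ζ) * ((r:ℂ)*ζ)) = (1 - s*r)^2 := by
          rw [hab, ← Complex.ofReal_one, ← Complex.ofReal_sub, Complex.normSq_ofReal]
          ring
        have hnss : normSq ((s:ℂ)*ζ) = s^2 := by
          rw [normSq_mul, hnsqζ, mul_one, Complex.normSq_ofReal]; ring
        have hnsr : normSq ((r:ℂ)*ζ) = r^2 := by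
          rw [normSq_mul, hnsqζ, mul_one, Complex.normSq_ofReal]; ring
        rw [hnsq_ab, hnss, hnsr] at hSP
        -- hSP : (1-s²)(1-r²) normSq(1 - conj(φ sζ) φ rζ) ≤ (1-nsq φsζ)(1-nsq φrζ)(1-sr)²
        have hus : (0:ℝ) < 1 - s := by linarith [hs.2]
        have hPs : 1 - normSq (φ ((s:ℂ)*ζ)) = P s * (1 - s) := by
          rw [hP]; field_simp
        have h1s : (1:ℝ) - s^2 = (1+s) * (1-s) := by ring
        rw [h1s, hPs] at hSP
        have := (mul_le_mul_iff_of_pos_right hus).1 (by nlinarith [hSP] :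
          ((1+s) * ((1 - r^2) * normSq (1 - conj (φ ((s:ℂ)*ζ)) * φ ((r:ℂ)*ζ)))) * (1-s) ≤
          (P s * ((1 - normSq (φ ((r:ℂ)*ζ))) * (1-s*r)^2)) * (1-s))
        exact this
    -- now convert to normSq (D r) form
    have hDnsq : normSq (1 - conj ω * φ ((r:ℂ)*ζ)) = normSq (D r) * (1-r)^2 := by
      have h1 : (1:ℂ) - conj ω * φ ((r:ℂ)*ζ) = conj ω * (ω - φ ((r:ℂ)*ζ)) := by
        linear_combination -hccω
      rw [h1]
      obtain ⟨_, h2⟩ := hDform r hr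
      rw [normSq_mul, normSq_conj, hnsqω, one_mul, h2]
      field_simp
    have hPr : 1 - normSq (φ ((r:ℂ)*ζ)) = P r * (1 - r) := by
      rw [hP]; field_simp
    rw [hDnsq, hPr] at hmain
    have h1r2 : (1:ℝ) - r^2 = (1+r)*(1-r) := by ring
    rw [h1r2] at hmain
    have h3 : (0:ℝ) < (1-r)^3 * 2 := by positivity
    exact (mul_le_mul_iff_of_pos_right h3).1 (by nlinarith [hmain])
  -- pass to the limit in Julia's inequality
  have hfinal : normSq d * 2 ≤ d.re * (2 * d.re) := by
    apply le_of_tendsto_of_tendsto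
      (f := fun r : ℝ => normSq (D r) * (1 + r))
      (g := fun r : ℝ => d.re * P r) (b := l)
    · have h1 : Tendsto (fun r : ℝ => (1:ℝ) + r) l (𝓝 2) := by
        have h : Tendsto (fun r : ℝ => (1:ℝ) + r) (𝓝 (1:ℝ)) (𝓝 (1 + 1)) :=
          (continuous_const.add continuous_id).tendsto 1
        simpa [one_add_one_eq_two] using h.mono_left nhdsWithin_le_nhds
      exact ((Complex.continuous_normSq.tendsto d).comp hDt).mul h1
    · exact tendsto_const_nhds.mul hPt
    · filter_upwards [hIoo] with r hr using hJulia r hr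
  -- conclude
  have hnsqd : normSq d ≤ d.re^2 := by nlinarith
  have him : d.im = 0 := by
    have := Complex.normSq_apply d
    nlinarith [sq_nonneg d.im]
  have hdrd : d = ((d.re : ℝ) : ℂ) := by
    apply Complex.ext
    · simp
    · simp [him]
  have hnormd : ‖d‖ = d.re := by
    conv_lhs => rw [hdrd]
    rw [Complex.norm_real, Real.norm_eq_abs, abs_of_pos hdrepos]
  have hnormdA : ‖d‖ = ‖A‖ := by
    rw [hd, norm_mul, norm_mul, RCLike.norm_conj, hω, hζ, one_mul, one_mul]
  constructor
  · show d = _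
    rw [← hnormdA, hnormd]; exact hdrd
  · rw [← hnormdA, hnormd]; exact hdrepos


lemma arg_ne_pi_of_re_pos {X : ℂ} (hX : 0 < X.re) : X.arg ≠ Real.pi := by
  intro h
  have := Complex.arg_eq_pi_iff.1 h
  linarith [this.1]

lemma ofReal_div_cpow {a : ℝ} (ha : 0 < a) {X : ℂ} (hX : 0 < X.re) (t : ℝ) :
    ((a : ℂ) / X) ^ (t : ℂ) = (((a ^ t : ℝ)) : ℂ) * X ^ (-(t : ℂ)) := by
  have hXne : X ≠ 0 := fun h => by simp [h] at hX
  have harg : X.arg ≠ Real.pi := arg_ne_pi_of_re_pos hX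
  have hXinv : X⁻¹ ≠ 0 := inv_ne_zero hXne
  have hane : (a : ℂ) ≠ 0 := Complex.ofReal_ne_zero.2 ha.ne'
  rw [div_eq_mul_inv, Complex.cpow_def_of_ne_zero (mul_ne_zero hane hXinv),
    Complex.log_ofReal_mul ha hXinv, add_mul, Complex.exp_add,
    ← Complex.cpow_def_of_ne_zero hXinv, Complex.inv_cpow _ _ harg, ← Complex.cpow_neg]
  congr 1
  rw [Complex.ofReal_log ha.le, ← Complex.cpow_def_of_ne_zero hane]
  exact (Complex.ofReal_cpow ha.le t).symm


lemma re_pos_aux {u v : ℂ} (hu : ‖u‖ < 1) (hv : ‖v‖ < 1) : 0 < (1 - u * conj v).re := by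
  have h3 : ‖u * conj v‖ < 1 := by
    rw [norm_mul, RCLike.norm_conj]
    nlinarith [norm_nonneg u, norm_nonneg v]
  have h4 := Complex.re_le_norm (u * conj v)
  simp only [Complex.sub_re, Complex.one_re]
  linarith

end AKI

open Complex ComplexConjugate in
set_option maxHeartbeats 1000000 in
/-- Let `φ, ψ` be holomorphic self-maps of the unit disk `D` and
`ζ₁, ζ₂, ω ∈ ∂D` be such that `φ` has nontangential limit `ω` at `ζ₁`, `ψ` has nontangential
limit `ω` at `ζ₂`, and the angular derivatives `φ'(ζ₁) = Aφ`, `ψ'(ζ₂) = Aψ` exist.  Then on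
the Hardy space `H²(D)` (`t = 1`) and on the weighted Bergman spaces `A²_s(D)` (`t = s + 2`,
`s > -1`) one has `lim_{r→1⁻} ⟨C_ψ* k_{rζ₂}, C_φ* k_{rζ₁}⟩ = (2/(|φ'(ζ₁)| + |ψ'(ζ₂)|))^t > 0`;
equivalently `lim_{r→1⁻} ((1-r²)/(1-φ(rζ₁)·conj(ψ(rζ₂))))^t = (2/(|φ'(ζ₁)|+|ψ'(ζ₂)|))^t`. -/
theorem adjoint_kernel_inner_limit_disk
    (t : ℝ) (ht : t = 1 ∨ ∃ s : ℝ, -1 < s ∧ t = s + 2)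
    (S : DiskKernelSpace t)
    (φ ψ : ℂ → ℂ)
    (hφ : DifferentiableOn ℂ φ Disk) (hφm : Set.MapsTo φ Disk Disk)
    (hψ : DifferentiableOn ℂ ψ Disk) (hψm : Set.MapsTo ψ Disk Disk)
    (ζ₁ ζ₂ ω : ℂ) (hζ₁ : ‖ζ₁‖ = 1) (hζ₂ : ‖ζ₂‖ = 1) (hω : ‖ω‖ = 1)
    (hRφ : HasNontangentialLimit φ ζ₁ ω) (hRψ : HasNontangentialLimit ψ ζ₂ ω)
    (Aφ Aψ : ℂ)
    (hAφ : HasNontangentialLimit (fun z => (φ z - ω) / (z - ζ₁)) ζ₁ Aφ)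
    (hAψ : HasNontangentialLimit (fun z => (ψ z - ω) / (z - ζ₂)) ζ₂ Aψ)
    (Cφ Cψ : S.H →L[ℂ] S.H)
    (hCφ : S.IsCompositionOperator φ Cφ) (hCψ : S.IsCompositionOperator ψ Cψ) :
    0 < (2 / (‖Aφ‖ + ‖Aψ‖)) ^ t ∧
    Tendsto
      (fun r : ℝ =>
        ⟪ContinuousLinearMap.adjoint Cφ
            ((‖S.kernel ((r : ℂ) * ζ₁)‖ : ℂ)⁻¹ • S.kernel ((r : ℂ) * ζ₁)),
          ContinuousLinearMap.adjoint Cψ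
            ((‖S.kernel ((r : ℂ) * ζ₂)‖ : ℂ)⁻¹ • S.kernel ((r : ℂ) * ζ₂))⟫)
      (𝓝[<] (1 : ℝ)) (𝓝 (((2 / (‖Aφ‖ + ‖Aψ‖)) ^ t : ℝ) : ℂ)) ∧
    Tendsto
      (fun r : ℝ =>
        ((1 - (r : ℂ) ^ 2) /
            (1 - φ ((r : ℂ) * ζ₁) * (starRingEnd ℂ) (ψ ((r : ℂ) * ζ₂)))) ^ (t : ℂ))
      (𝓝[<] (1 : ℝ)) (𝓝 (((2 / (‖Aφ‖ + ‖Aψ‖)) ^ t : ℝ) : ℂ)) := by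
  obtain ⟨hJCφ, hAφpos⟩ := AKI.JC hφ hφm hζ₁ hω hRφ hAφ
  obtain ⟨hJCψ, hAψpos⟩ := AKI.JC hψ hψm hζ₂ hω hRψ hAψ
  have hL : 0 < ‖Aφ‖ + ‖Aψ‖ := add_pos_of_pos_of_nonneg hAφpos (norm_nonneg _)
  set l : Filter ℝ := 𝓝[<] (1 : ℝ) with hl
  have hIoo : Set.Ioo (0:ℝ) 1 ∈ l :=
    Ioo_mem_nhdsLT_of_mem (by norm_num : (1:ℝ) ∈ Set.Ioc (0:ℝ) 1)
  have hnsqζ₁ : normSq ζ₁ = 1 := by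
    rw [normSq_eq_norm_sq, hζ₁]; norm_num
  have hnsqζ₂ : normSq ζ₂ = 1 := by
    rw [normSq_eq_norm_sq, hζ₂]; norm_num
  have hnsqω : normSq ω = 1 := by
    rw [normSq_eq_norm_sq, hω]; norm_num
  have hccω : conj ω * ω = 1 := by
    rw [mul_comm, Complex.mul_conj, hnsqω]; norm_num
  have hmem1 : ∀ r ∈ Set.Ioo (0:ℝ) 1, ((r:ℂ) * ζ₁) ∈ Disk := by
    intro r hr
    rw [AKI.mem_disk_iff, norm_mul, hζ₁, Complex.norm_real, Real.norm_eq_abs,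
      abs_of_pos hr.1, mul_one]
    exact hr.2
  have hmem2 : ∀ r ∈ Set.Ioo (0:ℝ) 1, ((r:ℂ) * ζ₂) ∈ Disk := by
    intro r hr
    rw [AKI.mem_disk_iff, norm_mul, hζ₂, Complex.norm_real, Real.norm_eq_abs,
      abs_of_pos hr.1, mul_one]
    exact hr.2
  have hXre : ∀ r ∈ Set.Ioo (0:ℝ) 1,
      0 < (1 - φ ((r:ℂ)*ζ₁) * conj (ψ ((r:ℂ)*ζ₂))).re := fun r hr =>
    AKI.re_pos_aux (AKI.mem_disk_iff.1 (hφm (hmem1 r hr)))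
      (AKI.mem_disk_iff.1 (hψm (hmem2 r hr)))
  have hXne : ∀ r ∈ Set.Ioo (0:ℝ) 1,
      (1 - φ ((r:ℂ)*ζ₁) * conj (ψ ((r:ℂ)*ζ₂))) ≠ 0 := by
    intro r hr h
    have h2 := hXre r hr
    rw [h] at h2
    simp at h2
  -- the quotient tendsto
  have hDφ := AKI.tendstoD hζ₁ hAφ
  rw [hJCφ] at hDφ
  have hDψ := AKI.tendstoD hζ₂ hAψ
  rw [hJCψ] at hDψ
  have hφrad : Tendsto (fun r : ℝ => φ ((r:ℂ)*ζ₁)) l (𝓝 ω) := AKI.radial_tendsto hζ₁ hRφ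
  have hconjDψ : Tendsto (fun r : ℝ =>
      conj (conj ω * (ω - ψ ((r:ℂ)*ζ₂)) / (1 - (r:ℂ)))) l (𝓝 ((‖Aψ‖ : ℝ) : ℂ)) := by
    have h := (Complex.continuous_conj.tendsto (((‖Aψ‖ : ℝ)) : ℂ)).comp hDψ
    rw [show conj (((‖Aψ‖ : ℝ)) : ℂ) = ((‖Aψ‖ : ℝ) : ℂ) from Complex.conj_ofReal _] at h
    exact h
  have hsum : Tendsto (fun r : ℝ =>
      conj ω * (ω - φ ((r:ℂ)*ζ₁)) / (1 - (r:ℂ)) +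
        φ ((r:ℂ)*ζ₁) * conj ω *
          conj (conj ω * (ω - ψ ((r:ℂ)*ζ₂)) / (1 - (r:ℂ)))) l
      (𝓝 (((‖Aφ‖ + ‖Aψ‖ : ℝ)) : ℂ)) := by
    have h := hDφ.add ((hφrad.mul
      (tendsto_const_nhds : Tendsto (fun _ : ℝ => conj ω) l (𝓝 (conj ω)))).mul hconjDψ)
    have hval : ((‖Aφ‖:ℝ):ℂ) + ω * conj ω * ((‖Aψ‖:ℝ):ℂ) = (((‖Aφ‖ + ‖Aψ‖ : ℝ)):ℂ) := by
      rw [mul_comm ω (conj ω), hccω]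
      push_cast; ring
    rw [hval] at h
    exact h
  have hq : Tendsto (fun r : ℝ =>
      (1 - φ ((r:ℂ)*ζ₁) * conj (ψ ((r:ℂ)*ζ₂))) / (1 - (r:ℂ))) l
      (𝓝 (((‖Aφ‖ + ‖Aψ‖ : ℝ)) : ℂ)) := by
    apply hsum.congr'
    filter_upwards [hIoo] with r hr
    have hconj : conj (conj ω * (ω - ψ ((r:ℂ)*ζ₂)) / (1 - (r:ℂ))) =
        ω * (conj ω - conj (ψ ((r:ℂ)*ζ₂))) / (1 - (r:ℂ)) := by
      rw [map_div₀, map_mul, map_sub]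
      simp [Complex.conj_conj, Complex.conj_ofReal]
    rw [hconj]
    have hsplit : conj ω * (ω - φ ((r:ℂ)*ζ₁)) / (1 - (r:ℂ)) +
        φ ((r:ℂ)*ζ₁) * conj ω * (ω * (conj ω - conj (ψ ((r:ℂ)*ζ₂))) / (1 - (r:ℂ))) =
        (conj ω * (ω - φ ((r:ℂ)*ζ₁)) +
          φ ((r:ℂ)*ζ₁) * conj ω * (ω * (conj ω - conj (ψ ((r:ℂ)*ζ₂))))) / (1 - (r:ℂ)) := by
      ring
    rw [hsplit]
    congr 1
    linear_combination (1 + φ ((r:ℂ)*ζ₁) * conj ω -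
      φ ((r:ℂ)*ζ₁) * conj (ψ ((r:ℂ)*ζ₂))) * hccω
  have hLne : (((‖Aφ‖ + ‖Aψ‖ : ℝ)) : ℂ) ≠ 0 := Complex.ofReal_ne_zero.2 hL.ne'
  have h2t : Tendsto (fun r : ℝ => 1 + (r:ℂ)) l (𝓝 2) := by
    have h : Tendsto (fun r : ℝ => 1 + (r:ℂ)) (𝓝 (1:ℝ)) (𝓝 (1 + ((1:ℝ):ℂ))) :=
      (continuous_const.add Complex.continuous_ofReal).tendsto 1
    have h2 : (1 : ℂ) + ((1:ℝ):ℂ) = 2 := by norm_num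
    rw [h2] at h
    exact h.mono_left nhdsWithin_le_nhds
  have hpos : (0:ℝ) < 2 / (‖Aφ‖ + ‖Aψ‖) := by positivity
  have hbase : Tendsto (fun r : ℝ =>
      (1 - (r:ℂ)^2) / (1 - φ ((r:ℂ)*ζ₁) * conj (ψ ((r:ℂ)*ζ₂)))) l
      (𝓝 (((2 / (‖Aφ‖ + ‖Aψ‖) : ℝ)) : ℂ)) := by
    have h := h2t.div hq hLne
    have hval : (2 : ℂ) / (((‖Aφ‖ + ‖Aψ‖ : ℝ)) : ℂ) = (((2 / (‖Aφ‖ + ‖Aψ‖) : ℝ)) : ℂ) := by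
      push_cast; ring
    rw [hval] at h
    apply h.congr'
    filter_upwards [hIoo] with r hr
    have h1 : (1:ℂ) - (r:ℂ) ≠ 0 := by
      intro hh
      have h2 : (r:ℂ) = 1 := by linear_combination -hh
      have h3 : r = 1 := by exact_mod_cast h2
      linarith [hr.2]
    show (1 + (r:ℂ)) / ((1 - φ ((r:ℂ)*ζ₁) * conj (ψ ((r:ℂ)*ζ₂))) / (1 - (r:ℂ))) =
      (1 - (r:ℂ)^2) / (1 - φ ((r:ℂ)*ζ₁) * conj (ψ ((r:ℂ)*ζ₂)))
    rw [div_div_eq_mul_div]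
    congr 1
    ring
  have hslit : (((2 / (‖Aφ‖ + ‖Aψ‖) : ℝ)) : ℂ) ∈ Complex.slitPlane := by
    rw [Complex.mem_slitPlane_iff]
    left
    rw [Complex.ofReal_re]
    exact hpos
  have hcpow : Tendsto (fun r : ℝ =>
      ((1 - (r:ℂ)^2) / (1 - φ ((r:ℂ)*ζ₁) * conj (ψ ((r:ℂ)*ζ₂)))) ^ (t:ℂ)) l
      (𝓝 ((((2 / (‖Aφ‖ + ‖Aψ‖)) ^ t : ℝ)) : ℂ)) := by
    have hc := hbase.cpow (tendsto_const_nhds : Tendsto (fun _ : ℝ => (t:ℂ)) l _) hslit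
    rw [Complex.ofReal_cpow hpos.le t]
    exact hc
  refine ⟨Real.rpow_pos_of_pos hpos t, ?_, hcpow⟩
  apply hcpow.congr'
  filter_upwards [hIoo] with r hr
  have hw : ((r:ℂ) * ζ₁) ∈ Disk := hmem1 r hr
  have hv : ((r:ℂ) * ζ₂) ∈ Disk := hmem2 r hr
  have hφw : φ ((r:ℂ)*ζ₁) ∈ Disk := hφm hw
  have hψv : ψ ((r:ℂ)*ζ₂) ∈ Disk := hψm hv
  have hr2 : (0:ℝ) < 1 - r^2 := by nlinarith [hr.1, hr.2]
  have harg2 : (1 - ψ ((r:ℂ)*ζ₂) * conj (φ ((r:ℂ)*ζ₁))).arg ≠ Real.pi :=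
    AKI.arg_ne_pi_of_re_pos
      (AKI.re_pos_aux (AKI.mem_disk_iff.1 hψv) (AKI.mem_disk_iff.1 hφw))
  have hinner : ⟪ContinuousLinearMap.adjoint Cφ (S.kernel ((r:ℂ)*ζ₁)),
      ContinuousLinearMap.adjoint Cψ (S.kernel ((r:ℂ)*ζ₂))⟫ =
      (1 - φ ((r:ℂ)*ζ₁) * conj (ψ ((r:ℂ)*ζ₂))) ^ (-(t:ℂ)) := by
    rw [ContinuousLinearMap.adjoint_inner_left, S.reproducing _ _ hw, hCφ _ _ hw,
      ← S.reproducing _ _ hφw, ← inner_conj_symm, ContinuousLinearMap.adjoint_inner_left,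
      S.reproducing _ _ hv, hCψ _ _ hv, S.eval_kernel _ hφw _ hψv]
    have hn : conj (-(t:ℂ)) = -(t:ℂ) := by
      rw [map_neg, Complex.conj_ofReal]
    have hcc : conj (1 - ψ ((r:ℂ)*ζ₂) * conj (φ ((r:ℂ)*ζ₁))) =
        1 - φ ((r:ℂ)*ζ₁) * conj (ψ ((r:ℂ)*ζ₂)) := by
      rw [map_sub, map_mul, Complex.conj_conj, map_one]
      ring
    calc conj ((1 - ψ ((r:ℂ)*ζ₂) * conj (φ ((r:ℂ)*ζ₁))) ^ (-(t:ℂ)))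
        = conj ((1 - ψ ((r:ℂ)*ζ₂) * conj (φ ((r:ℂ)*ζ₁))) ^ conj (-(t:ℂ))) := by rw [hn]
      _ = conj (1 - ψ ((r:ℂ)*ζ₂) * conj (φ ((r:ℂ)*ζ₁))) ^ (-(t:ℂ)) :=
        (Complex.conj_cpow _ _ harg2).symm
      _ = (1 - φ ((r:ℂ)*ζ₁) * conj (ψ ((r:ℂ)*ζ₂))) ^ (-(t:ℂ)) := by rw [hcc]
  have hker : ∀ u : ℂ, u ∈ Disk → normSq u = r^2 →
      ‖S.kernel u‖ = Real.sqrt ((1-r^2) ^ (-t)) := by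
    intro u hu hnsq
    have h2 : (1 : ℂ) - u * conj u = (((1 - r^2 : ℝ)) : ℂ) := by
      rw [Complex.mul_conj, hnsq]; push_cast; ring
    have h0 : ⟪S.kernel u, S.kernel u⟫ = (((1-r^2) ^ (-t) : ℝ) : ℂ) := by
      rw [S.reproducing _ _ hu, S.eval_kernel _ hu _ hu, h2,
        show (-(t:ℂ)) = ((-t : ℝ) : ℂ) from by push_cast; ring,
        ← Complex.ofReal_cpow (by linarith : (0:ℝ) ≤ 1 - r^2) (-t)]
    have h1 := (inner_self_eq_norm_sq_to_K (𝕜 := ℂ) (x := S.kernel u)).symm.trans h0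
    have h3 : ‖S.kernel u‖^2 = (1-r^2) ^ (-t) := by
      have h2' : ((‖S.kernel u‖^2 : ℝ) : ℂ) = (((1-r^2)^(-t) : ℝ) : ℂ) := by
        push_cast at h1 ⊢
        convert h1 using 2
        rfl
      exact Complex.ofReal_inj.mp h2'
    rw [← h3, Real.sqrt_sq (norm_nonneg _)]
  have hnsqw : normSq ((r:ℂ)*ζ₁) = r^2 := by
    rw [normSq_mul, hnsqζ₁, mul_one, Complex.normSq_ofReal]; ring
  have hnsqv : normSq ((r:ℂ)*ζ₂) = r^2 := by
    rw [normSq_mul, hnsqζ₂, mul_one, Complex.normSq_ofReal]; ring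
  have hNw := hker _ hw hnsqw
  have hNv := hker _ hv hnsqv
  symm
  rw [(ContinuousLinearMap.adjoint Cφ).map_smul, (ContinuousLinearMap.adjoint Cψ).map_smul,
    inner_smul_left, inner_smul_right, hinner, hNw, hNv,
    map_inv₀, Complex.conj_ofReal]
  rw [show (1 - (r:ℂ)^2) = (((1 - r^2 : ℝ)) : ℂ) from by push_cast; ring,
    AKI.ofReal_div_cpow hr2 (hXre r hr) t, ← mul_assoc]
  have hsc : ((Real.sqrt ((1-r^2)^(-t)) : ℝ) : ℂ)⁻¹ * ((Real.sqrt ((1-r^2)^(-t)) : ℝ) : ℂ)⁻¹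
      = (((1-r^2)^t : ℝ) : ℂ) := by
    rw [← Complex.ofReal_inv, ← Complex.ofReal_mul]
    congr 1
    rw [← mul_inv, Real.mul_self_sqrt (Real.rpow_nonneg (by linarith) _),
      ← Real.rpow_neg (by linarith), neg_neg]
  rw [hsc]
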